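/- Let n ≥ 2 and m, k be integers with gcd(n, m, k) = 1; set A = k and B = k − m. If (β+.0) and (β+.1) both hold, or (β+.0) and (γ−) both hold, or (β+.1) and (γ−) both hold, then n divides 8; if moreover neither (ρ.0) nor (ρ.1) holds, then n = 8. -/

import Mathlib

/-- `c ≡ n/2 (mod n)`: `2` divides `n` and `c ≡ n/2 (mod n)`. -/
def halfMod (n c : ℤ) : Prop := 2 ∣ n ∧ n ∣ (c - n / 2)

/-- `c ≡ ±n/p (mod n)`: `p` divides `n`, and `c ≡ n/p` or `c ≡ -n/p (mod n)`. -/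
def pmMod (n p c : ℤ) : Prop := p ∣ n ∧ (n ∣ (c - n / p) ∨ n ∣ (c + n / p))

/-- `c ≡ ±2n/5 (mod n)`: `5` divides `n`, and `c ≡ 2n/5` or `c ≡ -2n/5 (mod n)`. -/
def pm2n5Mod (n c : ℤ) : Prop := 5 ∣ n ∧ (n ∣ (c - 2 * (n / 5)) ∨ n ∣ (c + 2 * (n / 5)))

/-- Condition (ρ) for a parameter `c` (i.e. (ρ.0) when `c = B`, (ρ.1) when `c = A`):
`c ≡ n/2` or `c ≡ ±n/3` or `c ≡ ±n/4` or `c ≡ ±n/5` or `c ≡ ±2n/5 (mod n)`. -/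
def condRho (n c : ℤ) : Prop :=
  halfMod n c ∨ pmMod n 3 c ∨ pmMod n 4 c ∨ pmMod n 5 c ∨ pm2n5Mod n c


lemma aux2 (c : ℤ) (h : ¬ condRho 2 c) : (2:ℤ) ∣ c := by
  by_contra hc
  exact h (Or.inl ⟨by norm_num, by rw [show ((2:ℤ)/2) = 1 from by norm_num]; omega⟩)

lemma aux4 (c : ℤ) (h : ¬ condRho 4 c) : (4:ℤ) ∣ c := by
  by_contra hc
  have : (4:ℤ) ∣ c - 2 ∨ ((4:ℤ) ∣ c - 1 ∨ (4:ℤ) ∣ c + 1) := by omega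
  rcases this with h1 | h1
  · exact h (Or.inl ⟨by norm_num, by rw [show ((4:ℤ)/2) = 2 from by norm_num]; exact h1⟩)
  · exact h (Or.inr (Or.inr (Or.inl ⟨by norm_num,
      by rw [show ((4:ℤ)/4) = 1 from by norm_num]; exact h1⟩)))

theorem stmt15 (n : ℕ) (hn : 2 ≤ n) (m k : ℤ)
    (hgcd : Int.gcd (n : ℤ) ((Int.gcd m k : ℤ)) = 1)
    -- (β+.0) and (β+.1), or (β+.0) and (γ−), or (β+.1) and (γ−)
    (h : ((n : ℤ) ∣ (k + 3 * (k - m)) ∧ (n : ℤ) ∣ ((k - m) + 3 * k)) ∨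
         ((n : ℤ) ∣ (k + 3 * (k - m)) ∧ halfMod n (k - (k - m))) ∨
         ((n : ℤ) ∣ ((k - m) + 3 * k) ∧ halfMod n (k - (k - m)))) :
    n ∣ 8 ∧ ((¬ condRho (n : ℤ) (k - m) ∧ ¬ condRho (n : ℤ) k) → n = 8) := by
  have key : (↑n:ℤ) ∣ 8 * k ∧ (↑n:ℤ) ∣ 8 * (k - m) := by
    rcases h with ⟨h1, h2⟩ | ⟨h1, h2a, h2b⟩ | ⟨h1, h2a, h2b⟩
    · constructor
      · have := dvd_sub (h2.mul_left 3) h1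
        have e : 3 * ((k - m) + 3 * k) - (k + 3 * (k - m)) = 8 * k - 0 := by ring
        simpa [e] using this
      · have := dvd_sub (h1.mul_left 3) h2
        have e : 3 * (k + 3 * (k - m)) - ((k - m) + 3 * k) = 8 * (k - m) - 0 := by ring
        simpa [e] using this
    · have hn2 : ((↑n:ℤ) / 2) * 2 = (↑n:ℤ) := Int.ediv_mul_cancel h2a
      have h2m : (↑n:ℤ) ∣ 2 * m := by
        have := dvd_add (h2b.mul_left 2) (dvd_refl (↑n:ℤ))
        have e : 2 * (k - (k - m) - (↑n:ℤ) / 2) + ↑n = 2 * m + (↑n - ((↑n:ℤ)/2) * 2) := by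
          ring
        rw [e, hn2, sub_self, add_zero] at this
        exact this
      constructor
      · have := dvd_add (h1.mul_left 2) (h2m.mul_left 3)
        have e : 2 * (k + 3 * (k - m)) + 3 * (2 * m) = 8 * k := by ring
        rwa [e] at this
      · have := dvd_sub (h1.mul_left 2) (h2m.mul_left 1)
        have e : 2 * (k + 3 * (k - m)) - 1 * (2 * m) = 8 * (k - m) := by ring
        rwa [e] at this
    · have hn2 : ((↑n:ℤ) / 2) * 2 = (↑n:ℤ) := Int.ediv_mul_cancel h2a
      have h2m : (↑n:ℤ) ∣ 2 * m := by
        have := dvd_add (h2b.mul_left 2) (dvd_refl (↑n:ℤ))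
        have e : 2 * (k - (k - m) - (↑n:ℤ) / 2) + ↑n = 2 * m + (↑n - ((↑n:ℤ)/2) * 2) := by
          ring
        rw [e, hn2, sub_self, add_zero] at this
        exact this
      constructor
      · have := dvd_add (h1.mul_left 2) (h2m.mul_left 1)
        have e : 2 * ((k - m) + 3 * k) + 1 * (2 * m) = 8 * k := by ring
        rwa [e] at this
      · have := dvd_sub (h1.mul_left 2) (h2m.mul_left 3)
        have e : 2 * ((k - m) + 3 * k) - 3 * (2 * m) = 8 * (k - m) := by ring
        rwa [e] at this
  -- gcd(k, k-m) = gcd(m, k)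
  have hg : Int.gcd k (k - m) = Int.gcd m k := by
    apply Nat.dvd_antisymm
    · have : (↑(Int.gcd k (k - m)):ℤ) ∣ ↑(Int.gcd m k) := by
        apply Int.dvd_coe_gcd
        · have := dvd_sub (Int.gcd_dvd_left (a := k) (b := k - m))
            (Int.gcd_dvd_right (a := k) (b := k - m))
          simpa using this
        · exact Int.gcd_dvd_left _ _
      exact_mod_cast this
    · have : (↑(Int.gcd m k):ℤ) ∣ ↑(Int.gcd k (k - m)) := by
        apply Int.dvd_coe_gcd
        · exact Int.gcd_dvd_right _ _
        · exact dvd_sub (Int.gcd_dvd_right _ _) (Int.gcd_dvd_left _ _)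
      exact_mod_cast this
  have hdvd8 : n ∣ 8 := by
    have h1 : (↑n:ℤ) ∣ ↑(Int.gcd (8 * k) (8 * (k - m))) := Int.dvd_coe_gcd key.1 key.2
    rw [Int.gcd_mul_left] at h1
    have h2 : (↑n:ℤ) ∣ 8 * ↑(Int.gcd k (k - m)) := by
      simpa using h1
    have hcop : IsCoprime (↑n:ℤ) (↑(Int.gcd k (k - m)) : ℤ) := by
      rw [Int.isCoprime_iff_gcd_eq_one]
      rw [hg]
      simpa using hgcd
    have := hcop.dvd_of_dvd_mul_right (by rwa [mul_comm] at h2)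
    exact_mod_cast this
  refine ⟨hdvd8, ?_⟩
  rintro ⟨hB, hA⟩
  -- exclude n = 2 and n = 4
  have hn8 : n ≤ 8 := Nat.le_of_dvd (by norm_num) hdvd8
  have contra : ¬ ((↑n:ℤ) ∣ k ∧ (↑n:ℤ) ∣ (k - m)) := by
    rintro ⟨hk, hkm⟩
    have hm : (↑n:ℤ) ∣ m := by
      have := dvd_sub hk hkm
      simpa using this
    have : (↑n:ℤ) ∣ ↑(Int.gcd m k) := Int.dvd_coe_gcd hm hk
    have : (↑n:ℤ) ∣ ↑(Int.gcd (↑n:ℤ) (↑(Int.gcd m k):ℤ)) :=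
      Int.dvd_coe_gcd dvd_rfl this
    rw [hgcd] at this
    have h1 : n ∣ 1 := by exact_mod_cast this
    have := Nat.le_of_dvd one_pos h1
    omega
  interval_cases n
  · simp only [Nat.cast_ofNat] at hA hB contra
    exact absurd ⟨aux2 k hA, aux2 (k - m) hB⟩ contra
  · omega
  · simp only [Nat.cast_ofNat] at hA hB contra
    exact absurd ⟨aux4 k hA, aux4 (k - m) hB⟩ contra
  · omega
  · omega
  · omega
  · rfl
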